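/- There exists a complex number z with 0.44 < Re(z) < 0.45 and 2.81 < Im(z) < 2.82 such that 1 + 1/(2^z − 1) + 1/(3^z − 1) + 1/(5^z − 1) = 0 (numerically z ≈ 0.445959 + 2.81436·i). -/

import Mathlib

open Complex

lemma nrmLe (a b s : ℝ) (h : a^2+b^2 ≤ s^2) (hs : 0 ≤ s) : ‖(⟨a,b⟩:ℂ)‖ ≤ s := by
  rw [Complex.norm_def, Complex.normSq_mk]
  calc Real.sqrt (a*a+b*b) ≤ Real.sqrt (s^2) := by apply Real.sqrt_le_sqrt; nlinarith
  _ = s := Real.sqrt_sq hs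

lemma nrmLB (z : ℂ) (s : ℝ) (h : s^2 ≤ z.re^2+z.im^2) (hs : 0 ≤ s) : s ≤ ‖z‖ := by
  rw [Complex.norm_def, Complex.normSq_apply]
  calc s = Real.sqrt (s^2) := (Real.sqrt_sq hs).symm
  _ ≤ Real.sqrt (z.re*z.re+z.im*z.im) := by apply Real.sqrt_le_sqrt; nlinarith

lemma ballAdd {w₁ w₂ c₁ c₂ : ℂ} {r₁ r₂ : ℝ} (h₁ : ‖w₁-c₁‖ ≤ r₁) (h₂ : ‖w₂-c₂‖ ≤ r₂) :
    ‖(w₁+w₂)-(c₁+c₂)‖ ≤ r₁+r₂ := by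
  have : (w₁+w₂)-(c₁+c₂) = (w₁-c₁)+(w₂-c₂) := by ring
  rw [this]; exact (norm_add_le _ _).trans (add_le_add h₁ h₂)

lemma ballSub {w₁ w₂ c₁ c₂ : ℂ} {r₁ r₂ : ℝ} (h₁ : ‖w₁-c₁‖ ≤ r₁) (h₂ : ‖w₂-c₂‖ ≤ r₂) :
    ‖(w₁-w₂)-(c₁-c₂)‖ ≤ r₁+r₂ := by
  have : (w₁-w₂)-(c₁-c₂) = (w₁-c₁)-(w₂-c₂) := by ring
  rw [this]; exact (norm_sub_le _ _).trans (add_le_add h₁ h₂)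

lemma ballCen {w c c' : ℂ} {r s : ℝ} (h : ‖w-c‖ ≤ r) (h' : ‖c-c'‖ ≤ s) : ‖w-c'‖ ≤ r+s := by
  have : w-c' = (w-c)+(c-c') := by ring
  rw [this]; exact (norm_add_le _ _).trans (add_le_add h h')

lemma ballMul {w₁ w₂ c₁ c₂ : ℂ} {r₁ r₂ s₁ s₂ : ℝ} (h₁ : ‖w₁-c₁‖ ≤ r₁) (h₂ : ‖w₂-c₂‖ ≤ r₂)
    (hs₁ : ‖c₁‖ ≤ s₁) (hs₂ : ‖c₂‖ ≤ s₂) (hr₁ : 0 ≤ r₁) :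
    ‖w₁*w₂-c₁*c₂‖ ≤ s₁*r₂+s₂*r₁+r₁*r₂ := by
  have e : w₁*w₂-c₁*c₂ = c₁*(w₂-c₂) + (w₁-c₁)*c₂ + (w₁-c₁)*(w₂-c₂) := by ring
  rw [e]
  have b1 : ‖c₁*(w₂-c₂)‖ ≤ s₁*r₂ := by
    rw [norm_mul]; exact mul_le_mul hs₁ h₂ (norm_nonneg _) ((norm_nonneg _).trans hs₁)
  have b2 : ‖(w₁-c₁)*c₂‖ ≤ r₁*s₂ := by
    rw [norm_mul]; exact mul_le_mul h₁ hs₂ (norm_nonneg _) hr₁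
  have b3 : ‖(w₁-c₁)*(w₂-c₂)‖ ≤ r₁*r₂ := by
    rw [norm_mul]; exact mul_le_mul h₁ h₂ (norm_nonneg _) hr₁
  calc ‖c₁*(w₂-c₂) + (w₁-c₁)*c₂ + (w₁-c₁)*(w₂-c₂)‖
      ≤ ‖c₁*(w₂-c₂) + (w₁-c₁)*c₂‖ + ‖(w₁-c₁)*(w₂-c₂)‖ := norm_add_le _ _
    _ ≤ (‖c₁*(w₂-c₂)‖ + ‖(w₁-c₁)*c₂‖) + ‖(w₁-c₁)*(w₂-c₂)‖ := by
        have := norm_add_le (c₁*(w₂-c₂)) ((w₁-c₁)*c₂); linarith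
    _ ≤ s₁*r₂+s₂*r₁+r₁*r₂ := by linarith

lemma ballSq {y P : ℂ} {ρ s : ℝ} (h : ‖y-P‖ ≤ ρ) (hs : ‖P‖ ≤ s) (hρ : 0 ≤ ρ) :
    ‖y^2-P^2‖ ≤ 2*s*ρ+ρ^2 := by
  have := ballMul h h hs hs hρ
  calc ‖y^2-P^2‖ = ‖y*y-P*P‖ := by ring_nf
    _ ≤ s*ρ+s*ρ+ρ*ρ := this
    _ = 2*s*ρ+ρ^2 := by ring

lemma taylor7 (x : ℂ) (hx : ‖x‖ ≤ 1) :
    ‖Complex.exp x - (1 + x + x^2/2 + x^3/6 + x^4/24 + x^5/120 + x^6/720)‖ ≤ ‖x‖^7 * (8/35280) := by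
  have := Complex.exp_bound (x := x) hx (n := 7) (by norm_num)
  convert this using 2
  · simp [Finset.sum_range_succ, Nat.factorial]
  · norm_num [Nat.factorial]

lemma taylorAt (x : ℂ) {T : ℂ} {sx e : ℝ} (hx : ‖x‖ ≤ sx) (hsx : sx ≤ 1) (hs0 : 0 ≤ sx)
    (hT : 1 + x + x^2/2 + x^3/6 + x^4/24 + x^5/120 + x^6/720 = T)
    (he : sx^7 * (8/35280) ≤ e) : ‖Complex.exp x - T‖ ≤ e := by
  rw [← hT]
  refine (taylor7 x (hx.trans hsx)).trans (le_trans ?_ he)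
  have := pow_le_pow_left₀ (norm_nonneg x) hx 7
  nlinarith [norm_nonneg x]

lemma ballExpShift {w m P : ℂ} {ρ s r : ℝ} (h : ‖w-m‖ ≤ r) (hr : r ≤ 1)
    (hP : ‖Complex.exp m - P‖ ≤ ρ) (hs : ‖P‖ ≤ s) (hρ : 0 ≤ ρ) :
    ‖Complex.exp w - P‖ ≤ ρ + 2*r*(s+ρ) := by
  have hexpm : ‖Complex.exp m‖ ≤ s + ρ := by
    calc ‖Complex.exp m‖ = ‖P + (Complex.exp m - P)‖ := by ring_nf
      _ ≤ ‖P‖ + ‖Complex.exp m - P‖ := norm_add_le _ _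
      _ ≤ s + ρ := add_le_add hs hP
  have key : ‖Complex.exp w - Complex.exp m‖ ≤ 2*r*(s+ρ) := by
    have hw : Complex.exp w = Complex.exp m * Complex.exp (w - m) := by
      rw [← Complex.exp_add]; ring_nf
    rw [hw]
    have : Complex.exp m * Complex.exp (w-m) - Complex.exp m
        = Complex.exp m * (Complex.exp (w-m) - 1) := by ring
    rw [this, norm_mul]
    have h1 : ‖Complex.exp (w-m) - 1‖ ≤ 2*r := by
      have := Complex.norm_exp_sub_one_le (x := w-m)
        (h.trans hr)
      refine this.trans ?_
      linarith
    calc ‖Complex.exp m‖ * ‖Complex.exp (w-m) - 1‖ ≤ (s+ρ) * (2*r) := by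
          have hr0 : (0:ℝ) ≤ r := (norm_nonneg _).trans h
          apply mul_le_mul hexpm h1 (norm_nonneg _) (by linarith [norm_nonneg P])
      _ = 2*r*(s+ρ) := by ring
  calc ‖Complex.exp w - P‖ = ‖(Complex.exp w - Complex.exp m) + (Complex.exp m - P)‖ := by ring_nf
    _ ≤ ‖Complex.exp w - Complex.exp m‖ + ‖Complex.exp m - P‖ := norm_add_le _ _
    _ ≤ ρ + 2*r*(s+ρ) := by linarith

lemma ballNormUB {w c0 : ℂ} {r : ℝ} (h : ‖w-c0‖ ≤ r) : ‖w‖ ≤ ‖c0‖ + r := by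
  calc ‖w‖ = ‖c0 + (w - c0)‖ := by ring_nf
    _ ≤ ‖c0‖ + ‖w - c0‖ := norm_add_le _ _
    _ ≤ ‖c0‖ + r := by linarith

lemma ballNormLB {w c0 : ℂ} {r s : ℝ} (h : ‖w-c0‖ ≤ r) (hc : s ≤ ‖c0‖) : s - r ≤ ‖w‖ := by
  have := norm_sub_norm_le c0 w
  have e : ‖c0 - w‖ = ‖w - c0‖ := norm_sub_rev _ _
  linarith
lemma taylor9R (x : ℝ) (hx : |x| ≤ 1) :
    |Real.exp x - (1+x+x^2/2+x^3/6+x^4/24+x^5/120+x^6/720+x^7/5040+x^8/40320)| ≤ |x|^9 * (10/3265920) := by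
  have := Real.exp_bound (x := x) hx (n := 9) (by norm_num)
  convert this using 2
  · simp [Finset.sum_range_succ, Nat.factorial]
  · norm_num [Nat.factorial]

lemma log3_lo : ((274653:ℝ)/250000) < Real.log 3 := by
  have ht := taylor9R ((274653:ℝ)/500000) (by rw [abs_le]; constructor <;> norm_num)
  rw [abs_le] at ht
  obtain ⟨ht1, ht2⟩ := ht
  have habs : |((274653/500000:ℝ))| = ((274653/500000:ℝ)) := abs_of_pos (by norm_num)
  rw [habs] at ht1 ht2
  norm_num at ht1 ht2
  have he2 : Real.exp ((274653:ℝ)/250000) = Real.exp ((274653:ℝ)/500000) ^ 2 := by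
    rw [← Real.exp_nat_mul]; norm_num
  have hpos : (0:ℝ) < Real.exp ((274653:ℝ)/500000) := Real.exp_pos _
  rw [Real.lt_log_iff_exp_lt (by norm_num), he2]
  nlinarith [ht1, ht2, hpos]

lemma log3_hi : Real.log 3 < ((1098613:ℝ)/1000000) := by
  have ht := taylor9R ((1098613:ℝ)/2000000) (by rw [abs_le]; constructor <;> norm_num)
  rw [abs_le] at ht
  obtain ⟨ht1, ht2⟩ := ht
  have habs : |((1098613/2000000:ℝ))| = ((1098613/2000000:ℝ)) := abs_of_pos (by norm_num)
  rw [habs] at ht1 ht2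
  norm_num at ht1 ht2
  have he2 : Real.exp ((1098613:ℝ)/1000000) = Real.exp ((1098613:ℝ)/2000000) ^ 2 := by
    rw [← Real.exp_nat_mul]; norm_num
  have hpos : (0:ℝ) < Real.exp ((1098613:ℝ)/2000000) := Real.exp_pos _
  rw [Real.log_lt_iff_lt_exp (by norm_num), he2]
  nlinarith [ht1, ht2, hpos]

lemma log5_lo : ((1609437:ℝ)/1000000) < Real.log 5 := by
  have ht := taylor9R ((1609437:ℝ)/2000000) (by rw [abs_le]; constructor <;> norm_num)
  rw [abs_le] at ht
  obtain ⟨ht1, ht2⟩ := ht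
  have habs : |((1609437/2000000:ℝ))| = ((1609437/2000000:ℝ)) := abs_of_pos (by norm_num)
  rw [habs] at ht1 ht2
  norm_num at ht1 ht2
  have he2 : Real.exp ((1609437:ℝ)/1000000) = Real.exp ((1609437:ℝ)/2000000) ^ 2 := by
    rw [← Real.exp_nat_mul]; norm_num
  have hpos : (0:ℝ) < Real.exp ((1609437:ℝ)/2000000) := Real.exp_pos _
  rw [Real.lt_log_iff_exp_lt (by norm_num), he2]
  nlinarith [ht1, ht2, hpos]

lemma log5_hi : Real.log 5 < ((1609439:ℝ)/1000000) := by
  have ht := taylor9R ((1609439:ℝ)/2000000) (by rw [abs_le]; constructor <;> norm_num)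
  rw [abs_le] at ht
  obtain ⟨ht1, ht2⟩ := ht
  have habs : |((1609439/2000000:ℝ))| = ((1609439/2000000:ℝ)) := abs_of_pos (by norm_num)
  rw [habs] at ht1 ht2
  norm_num at ht1 ht2
  have he2 : Real.exp ((1609439:ℝ)/1000000) = Real.exp ((1609439:ℝ)/2000000) ^ 2 := by
    rw [← Real.exp_nat_mul]; norm_num
  have hpos : (0:ℝ) < Real.exp ((1609439:ℝ)/2000000) := Real.exp_pos _
  rw [Real.log_lt_iff_lt_exp (by norm_num), he2]
  nlinarith [ht1, ht2, hpos]

lemma log30eq : Real.log 30 = Real.log 2 + Real.log 3 + Real.log 5 := by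
  rw [show (30:ℝ) = 2*3*5 by norm_num, Real.log_mul (by norm_num) (by norm_num),
    Real.log_mul (by norm_num) (by norm_num)]
lemma encA : ‖(2:ℂ)^(⟨(223/500:ℝ), (1759/625:ℝ)⟩:ℂ) - (⟨(-5052887/10000000:ℝ), (1265089/1000000:ℝ)⟩:ℂ)‖ ≤ ((9:ℝ)/1000000) := by
  have hLlo : ((6931471803:ℝ)/10000000000) < Real.log 2 := by have h := Real.log_two_gt_d9; norm_num at h ⊢; linarith
  have hLhi : Real.log 2 < ((108304247:ℝ)/156250000) := by have h := Real.log_two_lt_d9; norm_num at h ⊢; linarith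
  have hz : ‖(↑(Real.log 2) * (⟨(223/500:ℝ), (1759/625:ℝ)⟩:ℂ)) - (⟨(7728591/25000000:ℝ), (12192459/6250000:ℝ)⟩:ℂ)‖ ≤ ((3:ℝ)/156250000) := by
    have he : (↑(Real.log 2) * (⟨(223/500:ℝ), (1759/625:ℝ)⟩:ℂ)) - (⟨(7728591/25000000:ℝ), (12192459/6250000:ℝ)⟩:ℂ)
        = (⟨Real.log 2 * (223/500:ℝ) - (7728591/25000000:ℝ), Real.log 2 * (1759/625:ℝ) - (12192459/6250000:ℝ)⟩:ℂ) := by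
      rw [Complex.ext_iff]; constructor <;> simp only [Complex.sub_re, Complex.sub_im, Complex.mul_re, Complex.mul_im, Complex.ofReal_re, Complex.ofReal_im] <;> ring
    rw [he]
    apply nrmLe _ _ _ ?_ (by norm_num)
    nlinarith [mul_nonneg (sub_nonneg.2 hLlo.le) (sub_nonneg.2 hLhi.le), sq_nonneg (Real.log 2)]
  have hx : ‖(⟨(7728591/100000000:ℝ), (12192459/25000000:ℝ)⟩:ℂ)‖ ≤ ((4939:ℝ)/10000) := nrmLe _ _ _ (by norm_num) (by norm_num)
  have hT : (1 + (⟨(7728591/100000000:ℝ), (12192459/25000000:ℝ)⟩:ℂ) + (⟨(7728591/100000000:ℝ), (12192459/25000000:ℝ)⟩:ℂ)^2/2 + (⟨(7728591/100000000:ℝ), (12192459/25000000:ℝ)⟩:ℂ)^3/6 + (⟨(7728591/100000000:ℝ), (12192459/25000000:ℝ)⟩:ℂ)^4/24 + (⟨(7728591/100000000:ℝ), (12192459/25000000:ℝ)⟩:ℂ)^5/120 + (⟨(7728591/100000000:ℝ), (12192459/25000000:ℝ)⟩:ℂ)^6/720 : ℂ) = (⟨(15270369086296574604305649654148682946755909536789/16000000000000000000000000000000000000000000000000:ℝ),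 (5062465004009375972990857084390635877371081239511/10000000000000000000000000000000000000000000000000:ℝ)⟩:ℂ) := by
    rw [Complex.ext_iff]; constructor <;> norm_num [Complex.ext_iff, Complex.mul_re, Complex.mul_im, Complex.div_re, Complex.div_im, Complex.normSq_apply, pow_succ]
  have h0 : ‖Complex.exp (⟨(7728591/100000000:ℝ), (12192459/25000000:ℝ)⟩:ℂ) - (⟨(15270369086296574604305649654148682946755909536789/16000000000000000000000000000000000000000000000000:ℝ), (5062465004009375972990857084390635877371081239511/10000000000000000000000000000000000000000000000000:ℝ)⟩:ℂ)‖ ≤ ((102621:ℝ)/62500000000) :=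
    taylorAt _ hx (by norm_num) (by norm_num) hT (by norm_num)
  have hd0 : ‖((⟨(15270369086296574604305649654148682946755909536789/16000000000000000000000000000000000000000000000000:ℝ), (5062465004009375972990857084390635877371081239511/10000000000000000000000000000000000000000000000000:ℝ)⟩:ℂ) - (⟨(9543981/10000000:ℝ), (1012493/2000000:ℝ)⟩:ℂ) : ℂ)‖ ≤ ((41743:ℝ)/1000000000000) := by
    have e : ((⟨(15270369086296574604305649654148682946755909536789/16000000000000000000000000000000000000000000000000:ℝ), (5062465004009375972990857084390635877371081239511/10000000000000000000000000000000000000000000000000:ℝ)⟩:ℂ) - (⟨(9543981/10000000:ℝ), (1012493/2000000:ℝ)⟩:ℂ) : ℂ) = (⟨(-513703425395694350345851317053244090463211/16000000000000000000000000000000000000000000000000:ℝ), (4009375972990857084390635877371081239511/10000000000000000000000000000000000000000000000000:ℝ)⟩:ℂ) := by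
      rw [Complex.ext_iff]; constructor <;> norm_num
    rw [e]; exact nrmLe _ _ _ (by norm_num) (by norm_num)
  have hrc0 : ‖Complex.exp (⟨(7728591/100000000:ℝ), (12192459/25000000:ℝ)⟩:ℂ) - (⟨(9543981/10000000:ℝ), (1012493/2000000:ℝ)⟩:ℂ)‖ ≤ ((1683679:ℝ)/1000000000000) := 
    (ballCen h0 hd0).trans (by norm_num)
  have hP0 : ‖(⟨(9543981/10000000:ℝ), (1012493/2000000:ℝ)⟩:ℂ)‖ ≤ ((2163:ℝ)/2000) := nrmLe _ _ _ (by norm_num) (by norm_num)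
  have hsq1' : ‖(Complex.exp (⟨(7728591/100000000:ℝ), (12192459/25000000:ℝ)⟩:ℂ))^2 - (⟨(9543981/10000000:ℝ), (1012493/2000000:ℝ)⟩:ℂ)^2‖ ≤ ((3641801:ℝ)/1000000000000) := by
    refine (ballSq hrc0 hP0 (by norm_num)).trans (by norm_num)
  have hsq1 : ‖(Complex.exp (⟨(7728591/100000000:ℝ), (12192459/25000000:ℝ)⟩:ℂ))^2 - (⟨(8182377681517/12500000000000:ℝ), (9663213954633/10000000000000:ℝ)⟩:ℂ)‖ ≤ ((3641801:ℝ)/1000000000000) := by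
    have e1 : (Complex.exp (⟨(7728591/100000000:ℝ), (12192459/25000000:ℝ)⟩:ℂ))^2 = (Complex.exp (⟨(7728591/100000000:ℝ), (12192459/25000000:ℝ)⟩:ℂ))^2 := by ring
    have e2 : ((⟨(9543981/10000000:ℝ), (1012493/2000000:ℝ)⟩:ℂ):ℂ)^2 = (⟨(8182377681517/12500000000000:ℝ), (9663213954633/10000000000000:ℝ)⟩:ℂ) := by
      rw [Complex.ext_iff]; constructor <;> norm_num [Complex.ext_iff, Complex.mul_re, Complex.mul_im, Complex.div_re, Complex.div_im, Complex.normSq_apply, pow_succ]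
    rw [← e1, ← e2]; exact hsq1'
  have hd1 : ‖((⟨(8182377681517/12500000000000:ℝ), (9663213954633/10000000000000:ℝ)⟩:ℂ) - (⟨(3272951/5000000:ℝ), (4831607/5000000:ℝ)⟩:ℂ) : ℂ)‖ ≤ ((19779:ℝ)/1000000000000) := by
    have e : ((⟨(8182377681517/12500000000000:ℝ), (9663213954633/10000000000000:ℝ)⟩:ℂ) - (⟨(3272951/5000000:ℝ), (4831607/5000000:ℝ)⟩:ℂ) : ℂ) = (⟨(181517/12500000000000:ℝ), (-45367/10000000000000:ℝ)⟩:ℂ) := by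
      rw [Complex.ext_iff]; constructor <;> norm_num
    rw [e]; exact nrmLe _ _ _ (by norm_num) (by norm_num)
  have hrc1 : ‖(Complex.exp (⟨(7728591/100000000:ℝ), (12192459/25000000:ℝ)⟩:ℂ))^2 - (⟨(3272951/5000000:ℝ), (4831607/5000000:ℝ)⟩:ℂ)‖ ≤ ((183079:ℝ)/50000000000) := 
    (ballCen hsq1 hd1).trans (by norm_num)
  have hP1 : ‖(⟨(3272951/5000000:ℝ), (4831607/5000000:ℝ)⟩:ℂ)‖ ≤ ((2921:ℝ)/2500) := nrmLe _ _ _ (by norm_num) (by norm_num)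
  have hsq2' : ‖((Complex.exp (⟨(7728591/100000000:ℝ), (12192459/25000000:ℝ)⟩:ℂ))^2)^2 - (⟨(3272951/5000000:ℝ), (4831607/5000000:ℝ)⟩:ℂ)^2‖ ≤ ((4278197:ℝ)/500000000000) := by
    refine (ballSq hrc1 hP1 (by norm_num)).trans (by norm_num)
  have hsq2 : ‖(Complex.exp (⟨(7728591/100000000:ℝ), (12192459/25000000:ℝ)⟩:ℂ))^4 - (⟨(-49344601383/97656250000:ℝ), (15813612962257/12500000000000:ℝ)⟩:ℂ)‖ ≤ ((4278197:ℝ)/500000000000) := by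
    have e1 : ((Complex.exp (⟨(7728591/100000000:ℝ), (12192459/25000000:ℝ)⟩:ℂ))^2)^2 = (Complex.exp (⟨(7728591/100000000:ℝ), (12192459/25000000:ℝ)⟩:ℂ))^4 := by ring
    have e2 : ((⟨(3272951/5000000:ℝ), (4831607/5000000:ℝ)⟩:ℂ):ℂ)^2 = (⟨(-49344601383/97656250000:ℝ), (15813612962257/12500000000000:ℝ)⟩:ℂ) := by
      rw [Complex.ext_iff]; constructor <;> norm_num [Complex.ext_iff, Complex.mul_re, Complex.mul_im, Complex.div_re, Complex.div_im, Complex.normSq_apply, pow_succ]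
    rw [← e1, ← e2]; exact hsq2'
  have hd2 : ‖((⟨(-49344601383/97656250000:ℝ), (15813612962257/12500000000000:ℝ)⟩:ℂ) - (⟨(-5052887/10000000:ℝ), (1265089/1000000:ℝ)⟩:ℂ) : ℂ)‖ ≤ ((53561:ℝ)/1000000000000) := by
    have e : ((⟨(-49344601383/97656250000:ℝ), (15813612962257/12500000000000:ℝ)⟩:ℂ) - (⟨(-5052887/10000000:ℝ), (1265089/1000000:ℝ)⟩:ℂ) : ℂ) = (⟨(-14189/781250000000:ℝ), (462257/12500000000000:ℝ)⟩:ℂ) := by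
      rw [Complex.ext_iff]; constructor <;> norm_num
    rw [e]; exact nrmLe _ _ _ (by norm_num) (by norm_num)
  have hrc2 : ‖(Complex.exp (⟨(7728591/100000000:ℝ), (12192459/25000000:ℝ)⟩:ℂ))^4 - (⟨(-5052887/10000000:ℝ), (1265089/1000000:ℝ)⟩:ℂ)‖ ≤ ((1721991:ℝ)/200000000000) := 
    (ballCen hsq2 hd2).trans (by norm_num)
  have hPk : ‖(⟨(-5052887/10000000:ℝ), (1265089/1000000:ℝ)⟩:ℂ)‖ ≤ ((13637:ℝ)/10000) := nrmLe _ _ _ (by norm_num) (by norm_num)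
  have hme : Complex.exp (⟨(7728591/25000000:ℝ), (12192459/6250000:ℝ)⟩:ℂ) = (Complex.exp (⟨(7728591/100000000:ℝ), (12192459/25000000:ℝ)⟩:ℂ))^4 := by
    have e : ((⟨(7728591/25000000:ℝ), (12192459/6250000:ℝ)⟩:ℂ):ℂ) = ((4:ℕ):ℂ) * (⟨(7728591/100000000:ℝ), (12192459/25000000:ℝ)⟩:ℂ) := by
      norm_num [Complex.ext_iff, Complex.mul_re, Complex.mul_im]
    rw [e, Complex.exp_nat_mul]
  have hem : ‖Complex.exp (⟨(7728591/25000000:ℝ), (12192459/6250000:ℝ)⟩:ℂ) - (⟨(-5052887/10000000:ℝ), (1265089/1000000:ℝ)⟩:ℂ)‖ ≤ ((1721991:ℝ)/200000000000) := by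
    rw [hme]; exact hrc2
  have hfin : ‖Complex.exp (↑(Real.log 2) * (⟨(223/500:ℝ), (1759/625:ℝ)⟩:ℂ)) - (⟨(-5052887/10000000:ℝ), (1265089/1000000:ℝ)⟩:ℂ)‖ ≤ ((4331161:ℝ)/500000000000) := by
    refine (ballExpShift hz (by norm_num) hem hPk (by norm_num)).trans (by norm_num)
  have hcpow : (2:ℂ)^(⟨(223/500:ℝ), (1759/625:ℝ)⟩:ℂ) = Complex.exp (↑(Real.log 2) * (⟨(223/500:ℝ), (1759/625:ℝ)⟩:ℂ)) := by
    rw [Complex.cpow_def_of_ne_zero (by norm_num)]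
    congr 1
    rw [show (2:ℂ) = ((2:ℝ):ℂ) by norm_num, ← Complex.ofReal_log (by norm_num : (0:ℝ) ≤ 2)]
  rw [hcpow]
  exact hfin.trans (by norm_num)

lemma encB : ‖(3:ℂ)^(⟨(223/500:ℝ), (1759/625:ℝ)⟩:ℂ) - (⟨(-1630277/1000000:ℝ), (162043/2000000:ℝ)⟩:ℂ)‖ ≤ ((11:ℝ)/1000000) := by
  have hLlo : ((274653:ℝ)/250000) < Real.log 3 := log3_lo
  have hLhi : Real.log 3 < ((1098613:ℝ)/1000000) := log3_hi
  have hz : ‖(↑(Real.log 3) * (⟨(223/500:ℝ), (1759/625:ℝ)⟩:ℂ)) - (⟨(1224953/2500000:ℝ), (9662297/3125000:ℝ)⟩:ℂ)‖ ≤ ((2173:ℝ)/1250000000) := by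
    have he : (↑(Real.log 3) * (⟨(223/500:ℝ), (1759/625:ℝ)⟩:ℂ)) - (⟨(1224953/2500000:ℝ), (9662297/3125000:ℝ)⟩:ℂ)
        = (⟨Real.log 3 * (223/500:ℝ) - (1224953/2500000:ℝ), Real.log 3 * (1759/625:ℝ) - (9662297/3125000:ℝ)⟩:ℂ) := by
      rw [Complex.ext_iff]; constructor <;> simp only [Complex.sub_re, Complex.sub_im, Complex.mul_re, Complex.mul_im, Complex.ofReal_re, Complex.ofReal_im] <;> ring
    rw [he]
    apply nrmLe _ _ _ ?_ (by norm_num)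
    nlinarith [mul_nonneg (sub_nonneg.2 hLlo.le) (sub_nonneg.2 hLhi.le), sq_nonneg (Real.log 3)]
  have hx : ‖(⟨(1224953/20000000:ℝ), (9662297/25000000:ℝ)⟩:ℂ)‖ ≤ ((1957:ℝ)/5000) := nrmLe _ _ _ (by norm_num) (by norm_num)
  have hT : (1 + (⟨(1224953/20000000:ℝ), (9662297/25000000:ℝ)⟩:ℂ) + (⟨(1224953/20000000:ℝ), (9662297/25000000:ℝ)⟩:ℂ)^2/2 + (⟨(1224953/20000000:ℝ), (9662297/25000000:ℝ)⟩:ℂ)^3/6 + (⟨(1224953/20000000:ℝ), (9662297/25000000:ℝ)⟩:ℂ)^4/24 + (⟨(1224953/20000000:ℝ), (9662297/25000000:ℝ)⟩:ℂ)^5/120 + (⟨(1224953/20000000:ℝ), (9662297/25000000:ℝ)⟩:ℂ)^6/720 : ℂ) = (⟨(236337721290394986516070568410469749398809238773347/240000000000000000000000000000000000000000000000000:ℝ), (7213499409242239689972973981641475082631902115203/18000000000000000000000000000000000000000000000000:ℝ)⟩:ℂ) := by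
    rw [Complex.ext_iff]; constructor <;> norm_num [Complex.ext_iff, Complex.mul_re, Complex.mul_im, Complex.div_re, Complex.div_im, Complex.normSq_apply, pow_succ]
  have h0 : ‖Complex.exp (⟨(1224953/20000000:ℝ), (9662297/25000000:ℝ)⟩:ℂ) - (⟨(236337721290394986516070568410469749398809238773347/240000000000000000000000000000000000000000000000000:ℝ), (7213499409242239689972973981641475082631902115203/18000000000000000000000000000000000000000000000000:ℝ)⟩:ℂ)‖ ≤ ((322277:ℝ)/1000000000000) :=
    taylorAt _ hx (by norm_num) (by norm_num) hT (by norm_num)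
  have hd0 : ‖((⟨(236337721290394986516070568410469749398809238773347/240000000000000000000000000000000000000000000000000:ℝ), (7213499409242239689972973981641475082631902115203/18000000000000000000000000000000000000000000000000:ℝ)⟩:ℂ) - (⟨(1969481/2000000:ℝ), (1603/4000:ℝ)⟩:ℂ) : ℂ)‖ ≤ ((10809:ℝ)/250000000000) := by
    have e : ((⟨(236337721290394986516070568410469749398809238773347/240000000000000000000000000000000000000000000000000:ℝ), (7213499409242239689972973981641475082631902115203/18000000000000000000000000000000000000000000000000:ℝ)⟩:ℂ) - (⟨(1969481/2000000:ℝ), (1603/4000:ℝ)⟩:ℂ) : ℂ) = (⟨(1290394986516070568410469749398809238773347/240000000000000000000000000000000000000000000000000:ℝ), (-590757760310027026018358524917368097884797/18000000000000000000000000000000000000000000000000:ℝ)⟩:ℂ) := by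
      rw [Complex.ext_iff]; constructor <;> norm_num
    rw [e]; exact nrmLe _ _ _ (by norm_num) (by norm_num)
  have hrc0 : ‖Complex.exp (⟨(1224953/20000000:ℝ), (9662297/25000000:ℝ)⟩:ℂ) - (⟨(1969481/2000000:ℝ), (1603/4000:ℝ)⟩:ℂ)‖ ≤ ((365513:ℝ)/1000000000000) := 
    (ballCen h0 hd0).trans (by norm_num)
  have hP0 : ‖(⟨(1969481/2000000:ℝ), (1603/4000:ℝ)⟩:ℂ)‖ ≤ ((10643:ℝ)/10000) := nrmLe _ _ _ (by norm_num) (by norm_num)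
  have hsq1' : ‖(Complex.exp (⟨(1224953/20000000:ℝ), (9662297/25000000:ℝ)⟩:ℂ))^2 - (⟨(1969481/2000000:ℝ), (1603/4000:ℝ)⟩:ℂ)^2‖ ≤ ((48627:ℝ)/62500000000) := by
    refine (ballSq hrc0 hP0 (by norm_num)).trans (by norm_num)
  have hsq1 : ‖(Complex.exp (⟨(1224953/20000000:ℝ), (9662297/25000000:ℝ)⟩:ℂ))^2 - (⟨(3236453159361/4000000000000:ℝ), (3157078043/4000000000:ℝ)⟩:ℂ)‖ ≤ ((48627:ℝ)/62500000000) := by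
    have e1 : (Complex.exp (⟨(1224953/20000000:ℝ), (9662297/25000000:ℝ)⟩:ℂ))^2 = (Complex.exp (⟨(1224953/20000000:ℝ), (9662297/25000000:ℝ)⟩:ℂ))^2 := by ring
    have e2 : ((⟨(1969481/2000000:ℝ), (1603/4000:ℝ)⟩:ℂ):ℂ)^2 = (⟨(3236453159361/4000000000000:ℝ), (3157078043/4000000000:ℝ)⟩:ℂ) := by
      rw [Complex.ext_iff]; constructor <;> norm_num [Complex.ext_iff, Complex.mul_re, Complex.mul_im, Complex.div_re, Complex.div_im, Complex.normSq_apply, pow_succ]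
    rw [← e1, ← e2]; exact hsq1'
  have hd1 : ‖((⟨(3236453159361/4000000000000:ℝ), (3157078043/4000000000:ℝ)⟩:ℂ) - (⟨(8091133/10000000:ℝ), (1578539/2000000:ℝ)⟩:ℂ) : ℂ)‖ ≤ ((1923:ℝ)/100000000000) := by
    have e : ((⟨(3236453159361/4000000000000:ℝ), (3157078043/4000000000:ℝ)⟩:ℂ) - (⟨(8091133/10000000:ℝ), (1578539/2000000:ℝ)⟩:ℂ) : ℂ) = (⟨(-40639/4000000000000:ℝ), (43/4000000000:ℝ)⟩:ℂ) := by
      rw [Complex.ext_iff]; constructor <;> norm_num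
    rw [e]; exact nrmLe _ _ _ (by norm_num) (by norm_num)
  have hrc1 : ‖(Complex.exp (⟨(1224953/20000000:ℝ), (9662297/25000000:ℝ)⟩:ℂ))^2 - (⟨(8091133/10000000:ℝ), (1578539/2000000:ℝ)⟩:ℂ)‖ ≤ ((398631:ℝ)/500000000000) := 
    (ballCen hsq1 hd1).trans (by norm_num)
  have hP1 : ‖(⟨(8091133/10000000:ℝ), (1578539/2000000:ℝ)⟩:ℂ)‖ ≤ ((2263:ℝ)/2000) := nrmLe _ _ _ (by norm_num) (by norm_num)
  have hsq2' : ‖((Complex.exp (⟨(1224953/20000000:ℝ), (9662297/25000000:ℝ)⟩:ℂ))^2)^2 - (⟨(8091133/10000000:ℝ), (1578539/2000000:ℝ)⟩:ℂ)^2‖ ≤ ((360841:ℝ)/200000000000) := by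
    refine (ballSq hrc1 hP1 (by norm_num)).trans (by norm_num)
  have hsq2 : ‖(Complex.exp (⟨(1224953/20000000:ℝ), (9662297/25000000:ℝ)⟩:ℂ))^4 - (⟨(396474857583/12500000000000:ℝ), (12772168994687/10000000000000:ℝ)⟩:ℂ)‖ ≤ ((360841:ℝ)/200000000000) := by
    have e1 : ((Complex.exp (⟨(1224953/20000000:ℝ), (9662297/25000000:ℝ)⟩:ℂ))^2)^2 = (Complex.exp (⟨(1224953/20000000:ℝ), (9662297/25000000:ℝ)⟩:ℂ))^4 := by ring
    have e2 : ((⟨(8091133/10000000:ℝ), (1578539/2000000:ℝ)⟩:ℂ):ℂ)^2 = (⟨(396474857583/12500000000000:ℝ), (12772168994687/10000000000000:ℝ)⟩:ℂ) := by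
      rw [Complex.ext_iff]; constructor <;> norm_num [Complex.ext_iff, Complex.mul_re, Complex.mul_im, Complex.div_re, Complex.div_im, Complex.normSq_apply, pow_succ]
    rw [← e1, ← e2]; exact hsq2'
  have hd2 : ‖((⟨(396474857583/12500000000000:ℝ), (12772168994687/10000000000000:ℝ)⟩:ℂ) - (⟨(15859/500000:ℝ), (12772169/10000000:ℝ)⟩:ℂ) : ℂ)‖ ≤ ((14829:ℝ)/1000000000000) := by
    have e : ((⟨(396474857583/12500000000000:ℝ), (12772168994687/10000000000000:ℝ)⟩:ℂ) - (⟨(15859/500000:ℝ), (12772169/10000000:ℝ)⟩:ℂ) : ℂ) = (⟨(-142417/12500000000000:ℝ), (-5313/10000000000000:ℝ)⟩:ℂ) := by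
      rw [Complex.ext_iff]; constructor <;> norm_num
    rw [e]; exact nrmLe _ _ _ (by norm_num) (by norm_num)
  have hrc2 : ‖(Complex.exp (⟨(1224953/20000000:ℝ), (9662297/25000000:ℝ)⟩:ℂ))^4 - (⟨(15859/500000:ℝ), (12772169/10000000:ℝ)⟩:ℂ)‖ ≤ ((909517:ℝ)/500000000000) := 
    (ballCen hsq2 hd2).trans (by norm_num)
  have hP2 : ‖(⟨(15859/500000:ℝ), (12772169/10000000:ℝ)⟩:ℂ)‖ ≤ ((12789:ℝ)/10000) := nrmLe _ _ _ (by norm_num) (by norm_num)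
  have hsq3' : ‖((Complex.exp (⟨(1224953/20000000:ℝ), (9662297/25000000:ℝ)⟩:ℂ))^4)^2 - (⟨(15859/500000:ℝ), (12772169/10000000:ℝ)⟩:ℂ)^2‖ ≤ ((4652729:ℝ)/1000000000000) := by
    refine (ballSq hrc2 hP2 (by norm_num)).trans (by norm_num)
  have hsq3 : ‖(Complex.exp (⟨(1224953/20000000:ℝ), (9662297/25000000:ℝ)⟩:ℂ))^8 - (⟨(-163027697812161/100000000000000:ℝ), (202553828171/2500000000000:ℝ)⟩:ℂ)‖ ≤ ((4652729:ℝ)/1000000000000) := by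
    have e1 : ((Complex.exp (⟨(1224953/20000000:ℝ), (9662297/25000000:ℝ)⟩:ℂ))^4)^2 = (Complex.exp (⟨(1224953/20000000:ℝ), (9662297/25000000:ℝ)⟩:ℂ))^8 := by ring
    have e2 : ((⟨(15859/500000:ℝ), (12772169/10000000:ℝ)⟩:ℂ):ℂ)^2 = (⟨(-163027697812161/100000000000000:ℝ), (202553828171/2500000000000:ℝ)⟩:ℂ) := by
      rw [Complex.ext_iff]; constructor <;> norm_num [Complex.ext_iff, Complex.mul_re, Complex.mul_im, Complex.div_re, Complex.div_im, Complex.normSq_apply, pow_succ]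
    rw [← e1, ← e2]; exact hsq3'
  have hd3 : ‖((⟨(-163027697812161/100000000000000:ℝ), (202553828171/2500000000000:ℝ)⟩:ℂ) - (⟨(-1630277/1000000:ℝ), (162043/2000000:ℝ)⟩:ℂ) : ℂ)‖ ≤ ((49613:ℝ)/1000000000000) := by
    have e : ((⟨(-163027697812161/100000000000000:ℝ), (202553828171/2500000000000:ℝ)⟩:ℂ) - (⟨(-1630277/1000000:ℝ), (162043/2000000:ℝ)⟩:ℂ) : ℂ) = (⟨(2187839/100000000000000:ℝ), (78171/2500000000000:ℝ)⟩:ℂ) := by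
      rw [Complex.ext_iff]; constructor <;> norm_num
    rw [e]; exact nrmLe _ _ _ (by norm_num) (by norm_num)
  have hrc3 : ‖(Complex.exp (⟨(1224953/20000000:ℝ), (9662297/25000000:ℝ)⟩:ℂ))^8 - (⟨(-1630277/1000000:ℝ), (162043/2000000:ℝ)⟩:ℂ)‖ ≤ ((2351171:ℝ)/500000000000) := 
    (ballCen hsq3 hd3).trans (by norm_num)
  have hPk : ‖(⟨(-1630277/1000000:ℝ), (162043/2000000:ℝ)⟩:ℂ)‖ ≤ ((817:ℝ)/500) := nrmLe _ _ _ (by norm_num) (by norm_num)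
  have hme : Complex.exp (⟨(1224953/2500000:ℝ), (9662297/3125000:ℝ)⟩:ℂ) = (Complex.exp (⟨(1224953/20000000:ℝ), (9662297/25000000:ℝ)⟩:ℂ))^8 := by
    have e : ((⟨(1224953/2500000:ℝ), (9662297/3125000:ℝ)⟩:ℂ):ℂ) = ((8:ℕ):ℂ) * (⟨(1224953/20000000:ℝ), (9662297/25000000:ℝ)⟩:ℂ) := by
      norm_num [Complex.ext_iff, Complex.mul_re, Complex.mul_im]
    rw [e, Complex.exp_nat_mul]
  have hem : ‖Complex.exp (⟨(1224953/2500000:ℝ), (9662297/3125000:ℝ)⟩:ℂ) - (⟨(-1630277/1000000:ℝ), (162043/2000000:ℝ)⟩:ℂ)‖ ≤ ((2351171:ℝ)/500000000000) := by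
    rw [hme]; exact hrc3
  have hfin : ‖Complex.exp (↑(Real.log 3) * (⟨(223/500:ℝ), (1759/625:ℝ)⟩:ℂ)) - (⟨(-1630277/1000000:ℝ), (162043/2000000:ℝ)⟩:ℂ)‖ ≤ ((207669:ℝ)/20000000000) := by
    refine (ballExpShift hz (by norm_num) hem hPk (by norm_num)).trans (by norm_num)
  have hcpow : (3:ℂ)^(⟨(223/500:ℝ), (1759/625:ℝ)⟩:ℂ) = Complex.exp (↑(Real.log 3) * (⟨(223/500:ℝ), (1759/625:ℝ)⟩:ℂ)) := by
    rw [Complex.cpow_def_of_ne_zero (by norm_num)]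
    congr 1
    rw [show (3:ℂ) = ((3:ℝ):ℂ) by norm_num, ← Complex.ofReal_log (by norm_num : (0:ℝ) ≤ 3)]
  rw [hcpow]
  exact hfin.trans (by norm_num)

lemma encC : ‖(5:ℂ)^(⟨(223/500:ℝ), (1759/625:ℝ)⟩:ℂ) - (⟨(-1863151/5000000:ℝ), (-2015847/1000000:ℝ)⟩:ℂ)‖ ≤ ((43:ℝ)/500000) := by
  have hLlo : ((1609437:ℝ)/1000000) < Real.log 5 := log5_lo
  have hLhi : Real.log 5 < ((1609439:ℝ)/1000000) := log5_hi
  have hz : ‖(↑(Real.log 5) * (⟨(223/500:ℝ), (1759/625:ℝ)⟩:ℂ)) - (⟨(8972617/12500000:ℝ), (56620029/12500000:ℝ)⟩:ℂ)‖ ≤ ((34369:ℝ)/10000000000) := by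
    have he : (↑(Real.log 5) * (⟨(223/500:ℝ), (1759/625:ℝ)⟩:ℂ)) - (⟨(8972617/12500000:ℝ), (56620029/12500000:ℝ)⟩:ℂ)
        = (⟨Real.log 5 * (223/500:ℝ) - (8972617/12500000:ℝ), Real.log 5 * (1759/625:ℝ) - (56620029/12500000:ℝ)⟩:ℂ) := by
      rw [Complex.ext_iff]; constructor <;> simp only [Complex.sub_re, Complex.sub_im, Complex.mul_re, Complex.mul_im, Complex.ofReal_re, Complex.ofReal_im] <;> ring
    rw [he]
    apply nrmLe _ _ _ ?_ (by norm_num)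
    nlinarith [mul_nonneg (sub_nonneg.2 hLlo.le) (sub_nonneg.2 hLhi.le), sq_nonneg (Real.log 5)]
  have hx : ‖(⟨(8972617/100000000:ℝ), (56620029/100000000:ℝ)⟩:ℂ)‖ ≤ ((2867:ℝ)/5000) := nrmLe _ _ _ (by norm_num) (by norm_num)
  have hT : (1 + (⟨(8972617/100000000:ℝ), (56620029/100000000:ℝ)⟩:ℂ) + (⟨(8972617/100000000:ℝ), (56620029/100000000:ℝ)⟩:ℂ)^2/2 + (⟨(8972617/100000000:ℝ), (56620029/100000000:ℝ)⟩:ℂ)^3/6 + (⟨(8972617/100000000:ℝ), (56620029/100000000:ℝ)⟩:ℂ)^4/24 + (⟨(8972617/100000000:ℝ), (56620029/100000000:ℝ)⟩:ℂ)^5/120 + (⟨(8972617/100000000:ℝ), (56620029/100000000:ℝ)⟩:ℂ)^6/720 : ℂ) = (⟨(20771413874345449543982620047961585141027608148349/22500000000000000000000000000000000000000000000000:ℝ), (5867884154522987954479870113647595406146847213883/10000000000000000000000000000000000000000000000000:ℝ)⟩:ℂ) := by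
    rw [Complex.ext_iff]; constructor <;> norm_num [Complex.ext_iff, Complex.mul_re, Complex.mul_im, Complex.div_re, Complex.div_im, Complex.normSq_apply, pow_succ]
  have h0 : ‖Complex.exp (⟨(8972617/100000000:ℝ), (56620029/100000000:ℝ)⟩:ℂ) - (⟨(20771413874345449543982620047961585141027608148349/22500000000000000000000000000000000000000000000000:ℝ), (5867884154522987954479870113647595406146847213883/10000000000000000000000000000000000000000000000000:ℝ)⟩:ℂ)‖ ≤ ((186701:ℝ)/40000000000) :=
    taylorAt _ hx (by norm_num) (by norm_num) hT (by norm_num)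
  have hd0 : ‖((⟨(20771413874345449543982620047961585141027608148349/22500000000000000000000000000000000000000000000000:ℝ), (5867884154522987954479870113647595406146847213883/10000000000000000000000000000000000000000000000000:ℝ)⟩:ℂ) - (⟨(9231739/10000000:ℝ), (1466971/2500000:ℝ)⟩:ℂ) : ℂ)‖ ≤ ((67999:ℝ)/1000000000000) := by
    have e : ((⟨(20771413874345449543982620047961585141027608148349/22500000000000000000000000000000000000000000000000:ℝ), (5867884154522987954479870113647595406146847213883/10000000000000000000000000000000000000000000000000:ℝ)⟩:ℂ) - (⟨(9231739/10000000:ℝ), (1466971/2500000:ℝ)⟩:ℂ) : ℂ) = (⟨(1124345449543982620047961585141027608148349/22500000000000000000000000000000000000000000000000:ℝ), (154522987954479870113647595406146847213883/10000000000000000000000000000000000000000000000000:ℝ)⟩:ℂ) := by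
      rw [Complex.ext_iff]; constructor <;> norm_num
    rw [e]; exact nrmLe _ _ _ (by norm_num) (by norm_num)
  have hrc0 : ‖Complex.exp (⟨(8972617/100000000:ℝ), (56620029/100000000:ℝ)⟩:ℂ) - (⟨(9231739/10000000:ℝ), (1466971/2500000:ℝ)⟩:ℂ)‖ ≤ ((1183881:ℝ)/250000000000) := 
    (ballCen h0 hd0).trans (by norm_num)
  have hP0 : ‖(⟨(9231739/10000000:ℝ), (1466971/2500000:ℝ)⟩:ℂ)‖ ≤ ((219:ℝ)/200) := nrmLe _ _ _ (by norm_num) (by norm_num)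
  have hsq1' : ‖(Complex.exp (⟨(8972617/100000000:ℝ), (56620029/100000000:ℝ)⟩:ℂ))^2 - (⟨(9231739/10000000:ℝ), (1466971/2500000:ℝ)⟩:ℂ)^2‖ ≤ ((518541:ℝ)/50000000000) := by
    refine (ballSq hrc0 hP0 (by norm_num)).trans (by norm_num)
  have hsq1 : ‖(Complex.exp (⟨(8972617/100000000:ℝ), (56620029/100000000:ℝ)⟩:ℂ))^2 - (⟨(10158588465333/20000000000000:ℝ), (13542693392569/12500000000000:ℝ)⟩:ℂ)‖ ≤ ((518541:ℝ)/50000000000) := by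
    have e1 : (Complex.exp (⟨(8972617/100000000:ℝ), (56620029/100000000:ℝ)⟩:ℂ))^2 = (Complex.exp (⟨(8972617/100000000:ℝ), (56620029/100000000:ℝ)⟩:ℂ))^2 := by ring
    have e2 : ((⟨(9231739/10000000:ℝ), (1466971/2500000:ℝ)⟩:ℂ):ℂ)^2 = (⟨(10158588465333/20000000000000:ℝ), (13542693392569/12500000000000:ℝ)⟩:ℂ) := by
      rw [Complex.ext_iff]; constructor <;> norm_num [Complex.ext_iff, Complex.mul_re, Complex.mul_im, Complex.div_re, Complex.div_im, Complex.normSq_apply, pow_succ]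
    rw [← e1, ← e2]; exact hsq1'
  have hd1 : ‖((⟨(10158588465333/20000000000000:ℝ), (13542693392569/12500000000000:ℝ)⟩:ℂ) - (⟨(2539647/5000000:ℝ), (2166831/2000000:ℝ)⟩:ℂ) : ℂ)‖ ≤ ((1917:ℝ)/40000000000) := by
    have e : ((⟨(10158588465333/20000000000000:ℝ), (13542693392569/12500000000000:ℝ)⟩:ℂ) - (⟨(2539647/5000000:ℝ), (2166831/2000000:ℝ)⟩:ℂ) : ℂ) = (⟨(465333/20000000000000:ℝ), (-357431/12500000000000:ℝ)⟩:ℂ) := by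
      rw [Complex.ext_iff]; constructor <;> norm_num
    rw [e]; exact nrmLe _ _ _ (by norm_num) (by norm_num)
  have hrc1 : ‖(Complex.exp (⟨(8972617/100000000:ℝ), (56620029/100000000:ℝ)⟩:ℂ))^2 - (⟨(2539647/5000000:ℝ), (2166831/2000000:ℝ)⟩:ℂ)‖ ≤ ((2083749:ℝ)/200000000000) := 
    (ballCen hsq1 hd1).trans (by norm_num)
  have hP1 : ‖(⟨(2539647/5000000:ℝ), (2166831/2000000:ℝ)⟩:ℂ)‖ ≤ ((5989:ℝ)/5000) := nrmLe _ _ _ (by norm_num) (by norm_num)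
  have hsq2' : ‖((Complex.exp (⟨(8972617/100000000:ℝ), (56620029/100000000:ℝ)⟩:ℂ))^2)^2 - (⟨(2539647/5000000:ℝ), (2166831/2000000:ℝ)⟩:ℂ)^2‖ ≤ ((4991851:ℝ)/200000000000) := by
    refine (ballSq hrc1 hP1 (by norm_num)).trans (by norm_num)
  have hsq2 : ‖(Complex.exp (⟨(8972617/100000000:ℝ), (56620029/100000000:ℝ)⟩:ℂ))^4 - (⟨(-91579687025589/100000000000000:ℝ), (5502985848657/5000000000000:ℝ)⟩:ℂ)‖ ≤ ((4991851:ℝ)/200000000000) := by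
    have e1 : ((Complex.exp (⟨(8972617/100000000:ℝ), (56620029/100000000:ℝ)⟩:ℂ))^2)^2 = (Complex.exp (⟨(8972617/100000000:ℝ), (56620029/100000000:ℝ)⟩:ℂ))^4 := by ring
    have e2 : ((⟨(2539647/5000000:ℝ), (2166831/2000000:ℝ)⟩:ℂ):ℂ)^2 = (⟨(-91579687025589/100000000000000:ℝ), (5502985848657/5000000000000:ℝ)⟩:ℂ) := by
      rw [Complex.ext_iff]; constructor <;> norm_num [Complex.ext_iff, Complex.mul_re, Complex.mul_im, Complex.div_re, Complex.div_im, Complex.normSq_apply, pow_succ]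
    rw [← e1, ← e2]; exact hsq2'
  have hd2 : ‖((⟨(-91579687025589/100000000000000:ℝ), (5502985848657/5000000000000:ℝ)⟩:ℂ) - (⟨(-9157969/10000000:ℝ), (2751493/2500000:ℝ)⟩:ℂ) : ℂ)‖ ≤ ((5517:ℝ)/100000000000) := by
    have e : ((⟨(-91579687025589/100000000000000:ℝ), (5502985848657/5000000000000:ℝ)⟩:ℂ) - (⟨(-9157969/10000000:ℝ), (2751493/2500000:ℝ)⟩:ℂ) : ℂ) = (⟨(2974411/100000000000000:ℝ), (-151343/5000000000000:ℝ)⟩:ℂ) := by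
      rw [Complex.ext_iff]; constructor <;> norm_num
    rw [e]; exact nrmLe _ _ _ (by norm_num) (by norm_num)
  have hrc2 : ‖(Complex.exp (⟨(8972617/100000000:ℝ), (56620029/100000000:ℝ)⟩:ℂ))^4 - (⟨(-9157969/10000000:ℝ), (2751493/2500000:ℝ)⟩:ℂ)‖ ≤ ((1000577:ℝ)/40000000000) := 
    (ballCen hsq2 hd2).trans (by norm_num)
  have hP2 : ‖(⟨(-9157969/10000000:ℝ), (2751493/2500000:ℝ)⟩:ℂ)‖ ≤ ((14333:ℝ)/10000) := nrmLe _ _ _ (by norm_num) (by norm_num)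
  have hsq3' : ‖((Complex.exp (⟨(8972617/100000000:ℝ), (56620029/100000000:ℝ)⟩:ℂ))^4)^2 - (⟨(-9157969/10000000:ℝ), (2751493/2500000:ℝ)⟩:ℂ)^2‖ ≤ ((71706977:ℝ)/1000000000000) := by
    refine (ballSq hrc2 hP2 (by norm_num)).trans (by norm_num)
  have hsq3 : ‖(Complex.exp (⟨(8972617/100000000:ℝ), (56620029/100000000:ℝ)⟩:ℂ))^8 - (⟨(-37263023459823/100000000000000:ℝ), (-25198087597717/12500000000000:ℝ)⟩:ℂ)‖ ≤ ((71706977:ℝ)/1000000000000) := by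
    have e1 : ((Complex.exp (⟨(8972617/100000000:ℝ), (56620029/100000000:ℝ)⟩:ℂ))^4)^2 = (Complex.exp (⟨(8972617/100000000:ℝ), (56620029/100000000:ℝ)⟩:ℂ))^8 := by ring
    have e2 : ((⟨(-9157969/10000000:ℝ), (2751493/2500000:ℝ)⟩:ℂ):ℂ)^2 = (⟨(-37263023459823/100000000000000:ℝ), (-25198087597717/12500000000000:ℝ)⟩:ℂ) := by
      rw [Complex.ext_iff]; constructor <;> norm_num [Complex.ext_iff, Complex.mul_re, Complex.mul_im, Complex.div_re, Complex.div_im, Complex.normSq_apply, pow_succ]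
    rw [← e1, ← e2]; exact hsq3'
  have hd3 : ‖((⟨(-37263023459823/100000000000000:ℝ), (-25198087597717/12500000000000:ℝ)⟩:ℂ) - (⟨(-1863151/5000000:ℝ), (-2015847/1000000:ℝ)⟩:ℂ) : ℂ)‖ ≤ ((46113:ℝ)/1000000000000) := by
    have e : ((⟨(-37263023459823/100000000000000:ℝ), (-25198087597717/12500000000000:ℝ)⟩:ℂ) - (⟨(-1863151/5000000:ℝ), (-2015847/1000000:ℝ)⟩:ℂ) : ℂ) = (⟨(-3459823/100000000000000:ℝ), (-97717/12500000000000:ℝ)⟩:ℂ) := by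
      rw [Complex.ext_iff]; constructor <;> norm_num
    rw [e]; exact nrmLe _ _ _ (by norm_num) (by norm_num)
  have hrc3 : ‖(Complex.exp (⟨(8972617/100000000:ℝ), (56620029/100000000:ℝ)⟩:ℂ))^8 - (⟨(-1863151/5000000:ℝ), (-2015847/1000000:ℝ)⟩:ℂ)‖ ≤ ((7175309:ℝ)/100000000000) := 
    (ballCen hsq3 hd3).trans (by norm_num)
  have hPk : ‖(⟨(-1863151/5000000:ℝ), (-2015847/1000000:ℝ)⟩:ℂ)‖ ≤ ((20521:ℝ)/10000) := nrmLe _ _ _ (by norm_num) (by norm_num)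
  have hme : Complex.exp (⟨(8972617/12500000:ℝ), (56620029/12500000:ℝ)⟩:ℂ) = (Complex.exp (⟨(8972617/100000000:ℝ), (56620029/100000000:ℝ)⟩:ℂ))^8 := by
    have e : ((⟨(8972617/12500000:ℝ), (56620029/12500000:ℝ)⟩:ℂ):ℂ) = ((8:ℕ):ℂ) * (⟨(8972617/100000000:ℝ), (56620029/100000000:ℝ)⟩:ℂ) := by
      norm_num [Complex.ext_iff, Complex.mul_re, Complex.mul_im]
    rw [e, Complex.exp_nat_mul]
  have hem : ‖Complex.exp (⟨(8972617/12500000:ℝ), (56620029/12500000:ℝ)⟩:ℂ) - (⟨(-1863151/5000000:ℝ), (-2015847/1000000:ℝ)⟩:ℂ)‖ ≤ ((7175309:ℝ)/100000000000) := by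
    rw [hme]; exact hrc3
  have hfin : ‖Complex.exp (↑(Real.log 5) * (⟨(223/500:ℝ), (1759/625:ℝ)⟩:ℂ)) - (⟨(-1863151/5000000:ℝ), (-2015847/1000000:ℝ)⟩:ℂ)‖ ≤ ((85859309:ℝ)/1000000000000) := by
    refine (ballExpShift hz (by norm_num) hem hPk (by norm_num)).trans (by norm_num)
  have hcpow : (5:ℂ)^(⟨(223/500:ℝ), (1759/625:ℝ)⟩:ℂ) = Complex.exp (↑(Real.log 5) * (⟨(223/500:ℝ), (1759/625:ℝ)⟩:ℂ)) := by
    rw [Complex.cpow_def_of_ne_zero (by norm_num)]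
    congr 1
    rw [show (5:ℂ) = ((5:ℝ):ℂ) by norm_num, ← Complex.ofReal_log (by norm_num : (0:ℝ) ≤ 5)]
  rw [hcpow]
  exact hfin.trans (by norm_num)
lemma cpow30 (z : ℂ) : (30:ℂ)^z = (2:ℂ)^z*(3:ℂ)^z*(5:ℂ)^z := by
  have h1 : (((2:ℝ)*(15:ℝ):ℝ):ℂ)^z = ((2:ℝ):ℂ)^z * ((15:ℝ):ℂ)^z := by
    rw [Complex.ofReal_mul]
    exact Complex.mul_cpow_ofReal_nonneg (by norm_num) (by norm_num) z
  have h2 : (((3:ℝ)*(5:ℝ):ℝ):ℂ)^z = ((3:ℝ):ℂ)^z * ((5:ℝ):ℂ)^z := by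
    rw [Complex.ofReal_mul]
    exact Complex.mul_cpow_ofReal_nonneg (by norm_num) (by norm_num) z
  norm_num at h1 h2
  rw [h1, h2]; ring

lemma hsA : ‖((⟨(-5052887/10000000:ℝ), (1265089/1000000:ℝ)⟩:ℂ):ℂ)‖ ≤ ((13637:ℝ)/10000) := nrmLe _ _ _ (by norm_num) (by norm_num)
lemma hsB : ‖((⟨(-1630277/1000000:ℝ), (162043/2000000:ℝ)⟩:ℂ):ℂ)‖ ≤ ((817:ℝ)/500) := nrmLe _ _ _ (by norm_num) (by norm_num)
lemma hsC : ‖((⟨(-1863151/5000000:ℝ), (-2015847/1000000:ℝ)⟩:ℂ):ℂ)‖ ≤ ((20521:ℝ)/10000) := nrmLe _ _ _ (by norm_num) (by norm_num)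

lemma encAB : ‖(2:ℂ)^(⟨(223/500:ℝ), (1759/625:ℝ)⟩:ℂ)*(3:ℂ)^(⟨(223/500:ℝ), (1759/625:ℝ)⟩:ℂ) - (⟨(1803152843891/2500000000000:ℝ), (-42067694961201/20000000000000:ℝ)⟩:ℂ)‖ ≤ ((74267:ℝ)/2500000000) := by
  have h := ballMul encA encB hsA hsB (by norm_num)
  have e : ((⟨(-5052887/10000000:ℝ), (1265089/1000000:ℝ)⟩:ℂ) * (⟨(-1630277/1000000:ℝ), (162043/2000000:ℝ)⟩:ℂ) : ℂ) = (⟨(1803152843891/2500000000000:ℝ), (-42067694961201/20000000000000:ℝ)⟩:ℂ) := by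
    rw [Complex.ext_iff]; constructor <;> norm_num [Complex.mul_re, Complex.mul_im]
  rw [e] at h; exact h.trans (by norm_num)

lemma hsAB : ‖((⟨(1803152843891/2500000000000:ℝ), (-42067694961201/20000000000000:ℝ)⟩:ℂ):ℂ)‖ ≤ ((22259:ℝ)/10000) := nrmLe _ _ _ (by norm_num) (by norm_num)

lemma encD : ‖(30:ℂ)^(⟨(223/500:ℝ), (1759/625:ℝ)⟩:ℂ) - (⟨(-450886551616247645563/100000000000000000000:ℝ), (-67016742101309022729/100000000000000000000:ℝ)⟩:ℂ)‖ ≤ ((631:ℝ)/2500000) := by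
  rw [cpow30]
  have h := ballMul encAB encC hsAB hsC (by norm_num)
  have e : ((⟨(1803152843891/2500000000000:ℝ), (-42067694961201/20000000000000:ℝ)⟩:ℂ) * (⟨(-1863151/5000000:ℝ), (-2015847/1000000:ℝ)⟩:ℂ) : ℂ) = (⟨(-450886551616247645563/100000000000000000000:ℝ), (-67016742101309022729/100000000000000000000:ℝ)⟩:ℂ) := by
    rw [Complex.ext_iff]; constructor <;> norm_num [Complex.mul_re, Complex.mul_im]
  rw [e] at h; exact h.trans (by norm_num)

lemma hFc : ‖(30:ℂ)^(⟨(223/500:ℝ), (1759/625:ℝ)⟩:ℂ) - (2:ℂ)^(⟨(223/500:ℝ), (1759/625:ℝ)⟩:ℂ) - (3:ℂ)^(⟨(223/500:ℝ), (1759/625:ℝ)⟩:ℂ) - (5:ℂ)^(⟨(223/500:ℝ), (1759/625:ℝ)⟩:ℂ) + 2‖ ≤ ((1163:ℝ)/1000000) := by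
  have h1 := ballSub (ballSub (ballSub encD encA) encB) encC
  have e : ((⟨(-450886551616247645563/100000000000000000000:ℝ), (-67016742101309022729/100000000000000000000:ℝ)⟩:ℂ) - (⟨(-5052887/10000000:ℝ), (1265089/1000000:ℝ)⟩:ℂ) - (⟨(-1630277/1000000:ℝ), (162043/2000000:ℝ)⟩:ℂ) - (⟨(-1863151/5000000:ℝ), (-2015847/1000000:ℝ)⟩:ℂ) : ℂ) = (⟨(-200066961616247645563/100000000000000000000:ℝ), (-43092101309022729/100000000000000000000:ℝ)⟩:ℂ) := by
    rw [Complex.ext_iff]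
    constructor <;> norm_num [Complex.sub_re, Complex.sub_im] <;> ring_nf
  rw [e] at h1
  have h2 : ‖((30:ℂ)^(⟨(223/500:ℝ), (1759/625:ℝ)⟩:ℂ) - (2:ℂ)^(⟨(223/500:ℝ), (1759/625:ℝ)⟩:ℂ) - (3:ℂ)^(⟨(223/500:ℝ), (1759/625:ℝ)⟩:ℂ) - (5:ℂ)^(⟨(223/500:ℝ), (1759/625:ℝ)⟩:ℂ) + 2) - (⟨(-66961616247645563/100000000000000000000:ℝ), (-43092101309022729/100000000000000000000:ℝ)⟩:ℂ)‖ ≤ ((28:ℝ)/78125) := by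
    have e2 : ((30:ℂ)^(⟨(223/500:ℝ), (1759/625:ℝ)⟩:ℂ) - (2:ℂ)^(⟨(223/500:ℝ), (1759/625:ℝ)⟩:ℂ) - (3:ℂ)^(⟨(223/500:ℝ), (1759/625:ℝ)⟩:ℂ) - (5:ℂ)^(⟨(223/500:ℝ), (1759/625:ℝ)⟩:ℂ) + 2) - (⟨(-66961616247645563/100000000000000000000:ℝ), (-43092101309022729/100000000000000000000:ℝ)⟩:ℂ)
        = ((30:ℂ)^(⟨(223/500:ℝ), (1759/625:ℝ)⟩:ℂ) - (2:ℂ)^(⟨(223/500:ℝ), (1759/625:ℝ)⟩:ℂ) - (3:ℂ)^(⟨(223/500:ℝ), (1759/625:ℝ)⟩:ℂ) - (5:ℂ)^(⟨(223/500:ℝ), (1759/625:ℝ)⟩:ℂ)) - (⟨(-200066961616247645563/100000000000000000000:ℝ), (-43092101309022729/100000000000000000000:ℝ)⟩:ℂ) := by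
      rw [Complex.ext_iff]
      constructor <;>
        simp only [Complex.sub_re, Complex.sub_im, Complex.add_re, Complex.add_im] <;>
        norm_num <;> ring_nf
    rw [e2]; exact h1.trans (by norm_num)
  calc ‖(30:ℂ)^(⟨(223/500:ℝ), (1759/625:ℝ)⟩:ℂ) - (2:ℂ)^(⟨(223/500:ℝ), (1759/625:ℝ)⟩:ℂ) - (3:ℂ)^(⟨(223/500:ℝ), (1759/625:ℝ)⟩:ℂ) - (5:ℂ)^(⟨(223/500:ℝ), (1759/625:ℝ)⟩:ℂ) + 2‖
      ≤ ‖(⟨(-66961616247645563/100000000000000000000:ℝ), (-43092101309022729/100000000000000000000:ℝ)⟩:ℂ)‖ + ((28:ℝ)/78125) := ballNormUB h2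
    _ ≤ ((4023:ℝ)/5000000) + ((28:ℝ)/78125) := by gcongr; exact nrmLe _ _ _ (by norm_num) (by norm_num)
    _ ≤ ((1163:ℝ)/1000000) := by norm_num

lemma encL (L m w : ℝ) (hlo : m - w ≤ L) (hhi : L ≤ m + w) (hw : 0 ≤ w) :
    ‖((L:ℂ)) - (⟨m, 0⟩:ℂ)‖ ≤ w := by
  have e : ((L:ℂ)) - (⟨m, 0⟩:ℂ) = (⟨L - m, 0⟩:ℂ) := by
    rw [Complex.ext_iff]; constructor <;> simp [Complex.ofReal_re, Complex.ofReal_im]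
  rw [e]
  apply nrmLe _ _ _ ?_ hw
  nlinarith

lemma encT2 : ‖((2:ℂ)^(⟨(223/500:ℝ), (1759/625:ℝ)⟩:ℂ) * ↑(Real.log 2)) - (⟨(-70047887553754957/200000000000000000:ℝ), (17537857469896379/20000000000000000:ℝ)⟩:ℂ)‖ ≤ ((39:ℝ)/6250000) := by
  have hL : ‖((Real.log 2 : ℝ):ℂ) - (⟨(13862943611/20000000000:ℝ), 0⟩:ℂ)‖ ≤ ((1:ℝ)/4000000000) := by
    apply encL _ _ _ ?_ ?_ (by norm_num) <;> (have h1 := Real.log_two_gt_d9; have h2 := Real.log_two_lt_d9; norm_num at h1 h2; linarith)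
  have hsL : ‖(⟨(13862943611/20000000000:ℝ), 0⟩:ℂ)‖ ≤ ((693217:ℝ)/1000000) := nrmLe _ _ _ (by norm_num) (by norm_num)
  have h := ballMul encA hL (nrmLe _ _ _ (by norm_num) (by norm_num) : ‖((⟨(-5052887/10000000:ℝ), (1265089/1000000:ℝ)⟩:ℂ):ℂ)‖ ≤ ((13637:ℝ)/10000)) hsL (by norm_num)
  have e : ((⟨(-5052887/10000000:ℝ), (1265089/1000000:ℝ)⟩:ℂ) * (⟨(13862943611/20000000000:ℝ), 0⟩:ℂ) : ℂ) = (⟨(-70047887553754957/200000000000000000:ℝ), (17537857469896379/20000000000000000:ℝ)⟩:ℂ) := by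
    rw [Complex.ext_iff]; constructor <;> norm_num [Complex.mul_re, Complex.mul_im]
  rw [e] at h; exact h.trans (by norm_num)

lemma encT3 : ‖((3:ℂ)^(⟨(223/500:ℝ), (1759/625:ℝ)⟩:ℂ) * ↑(Real.log 3)) - (⟨(-143283415253/80000000000:ℝ), (14241797227/160000000000:ℝ)⟩:ℂ)‖ ≤ ((1291:ℝ)/100000000) := by
  have hL : ‖((Real.log 3 : ℝ):ℂ) - (⟨(87889/80000:ℝ), 0⟩:ℂ)‖ ≤ ((1:ℝ)/2000000) := by
    apply encL _ _ _ ?_ ?_ (by norm_num) <;> (have h1 := log3_lo; have h2 := log3_hi; linarith)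
  have hsL : ‖(⟨(87889/80000:ℝ), 0⟩:ℂ)‖ ≤ ((1098723:ℝ)/1000000) := nrmLe _ _ _ (by norm_num) (by norm_num)
  have h := ballMul encB hL (nrmLe _ _ _ (by norm_num) (by norm_num) : ‖((⟨(-1630277/1000000:ℝ), (162043/2000000:ℝ)⟩:ℂ):ℂ)‖ ≤ ((817:ℝ)/500)) hsL (by norm_num)
  have e : ((⟨(-1630277/1000000:ℝ), (162043/2000000:ℝ)⟩:ℂ) * (⟨(87889/80000:ℝ), 0⟩:ℂ) : ℂ) = (⟨(-143283415253/80000000000:ℝ), (14241797227/160000000000:ℝ)⟩:ℂ) := by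
    rw [Complex.ext_iff]; constructor <;> norm_num [Complex.mul_re, Complex.mul_im]
  rw [e] at h; exact h.trans (by norm_num)

lemma encT5 : ‖((5:ℂ)^(⟨(223/500:ℝ), (1759/625:ℝ)⟩:ℂ) * ↑(Real.log 5)) - (⟨(-1499313009569/2500000000000:ℝ), (-1622190381993/500000000000:ℝ)⟩:ℂ)‖ ≤ ((439:ℝ)/3125000) := by
  have hL : ‖((Real.log 5 : ℝ):ℂ) - (⟨(804719/500000:ℝ), 0⟩:ℂ)‖ ≤ ((1:ℝ)/1000000) := by
    apply encL _ _ _ ?_ ?_ (by norm_num) <;> (have h1 := log5_lo; have h2 := log5_hi; linarith)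
  have hsL : ‖(⟨(804719/500000:ℝ), 0⟩:ℂ)‖ ≤ ((1006:ℝ)/625) := nrmLe _ _ _ (by norm_num) (by norm_num)
  have h := ballMul encC hL (nrmLe _ _ _ (by norm_num) (by norm_num) : ‖((⟨(-1863151/5000000:ℝ), (-2015847/1000000:ℝ)⟩:ℂ):ℂ)‖ ≤ ((20521:ℝ)/10000)) hsL (by norm_num)
  have e : ((⟨(-1863151/5000000:ℝ), (-2015847/1000000:ℝ)⟩:ℂ) * (⟨(804719/500000:ℝ), 0⟩:ℂ) : ℂ) = (⟨(-1499313009569/2500000000000:ℝ), (-1622190381993/500000000000:ℝ)⟩:ℂ) := by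
    rw [Complex.ext_iff]; constructor <;> norm_num [Complex.mul_re, Complex.mul_im]
  rw [e] at h; exact h.trans (by norm_num)

lemma encT30 : ‖((30:ℂ)^(⟨(223/500:ℝ), (1759/625:ℝ)⟩:ℂ) * ↑(Real.log 30)) - (⟨(-30671085870967386915665481977993/2000000000000000000000000000000:ℝ), (-4558743755859795624493240624419/2000000000000000000000000000000:ℝ)⟩:ℂ)‖ ≤ ((4327:ℝ)/5000000) := by
  have hL : ‖((Real.log 30 : ℝ):ℂ) - (⟨(68023953611/20000000000:ℝ), 0⟩:ℂ)‖ ≤ ((6001:ℝ)/4000000000) := by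
    apply encL _ _ _ ?_ ?_ (by norm_num) <;> (rw [log30eq]; have h1 := Real.log_two_gt_d9; have h2 := Real.log_two_lt_d9; norm_num at h1 h2; have h3 := log3_lo; have h4 := log3_hi; have h5 := log5_lo; have h6 := log5_hi; linarith)
  have hsL : ‖(⟨(68023953611/20000000000:ℝ), 0⟩:ℂ)‖ ≤ ((170077:ℝ)/50000) := nrmLe _ _ _ (by norm_num) (by norm_num)
  have h := ballMul encD hL (nrmLe _ _ _ (by norm_num) (by norm_num) : ‖((⟨(-450886551616247645563/100000000000000000000:ℝ), (-67016742101309022729/100000000000000000000:ℝ)⟩:ℂ):ℂ)‖ ≤ ((4563:ℝ)/1000)) hsL (by norm_num)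
  have e : ((⟨(-450886551616247645563/100000000000000000000:ℝ), (-67016742101309022729/100000000000000000000:ℝ)⟩:ℂ) * (⟨(68023953611/20000000000:ℝ), 0⟩:ℂ) : ℂ) = (⟨(-30671085870967386915665481977993/2000000000000000000000000000000:ℝ), (-4558743755859795624493240624419/2000000000000000000000000000000:ℝ)⟩:ℂ) := by
    rw [Complex.ext_iff]; constructor <;> norm_num [Complex.mul_re, Complex.mul_im]
  rw [e] at h; exact h.trans (by norm_num)

lemma hFd : ((629:ℝ)/50) ≤ ‖(30:ℂ)^(⟨(223/500:ℝ), (1759/625:ℝ)⟩:ℂ) * ↑(Real.log 30) - (2:ℂ)^(⟨(223/500:ℝ), (1759/625:ℝ)⟩:ℂ) * ↑(Real.log 2) - (3:ℂ)^(⟨(223/500:ℝ), (1759/625:ℝ)⟩:ℂ) * ↑(Real.log 3) - (5:ℂ)^(⟨(223/500:ℝ), (1759/625:ℝ)⟩:ℂ) * ↑(Real.log 5)‖ := by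
  have h := ballSub (ballSub (ballSub encT30 encT2) encT3) encT5
  have e : ((⟨(-30671085870967386915665481977993/2000000000000000000000000000000:ℝ), (-4558743755859795624493240624419/2000000000000000000000000000000:ℝ)⟩:ℂ) - (⟨(-70047887553754957/200000000000000000:ℝ), (17537857469896379/20000000000000000:ℝ)⟩:ℂ) - (⟨(-143283415253/80000000000:ℝ), (14241797227/160000000000:ℝ)⟩:ℂ) - (⟨(-1499313009569/2500000000000:ℝ), (-1622190381993/500000000000:ℝ)⟩:ℂ) : ℂ) = (⟨(-25189071206449637345665481977993/2000000000000000000000000000000:ℝ), (-1790440214933524493240624419/2000000000000000000000000000000:ℝ)⟩:ℂ) := by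
    rw [Complex.ext_iff]
    constructor <;> norm_num [Complex.sub_re, Complex.sub_im] <;> ring_nf
  rw [e] at h
  have hlb : ((629:ℝ)/50) + ((513:ℝ)/500000) ≤ ‖((⟨(-25189071206449637345665481977993/2000000000000000000000000000000:ℝ), (-1790440214933524493240624419/2000000000000000000000000000000:ℝ)⟩:ℂ):ℂ)‖ := nrmLB _ _ (by norm_num) (by norm_num)
  have h2 := h.trans (show (((4327:ℝ)/5000000):ℝ) + ((39:ℝ)/6250000) + ((1291:ℝ)/100000000) + ((439:ℝ)/3125000) ≤ ((513:ℝ)/500000) by norm_num)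
  have := ballNormLB h2 hlb
  linarith


noncomputable def Fm (z : ℂ) : ℂ := (30:ℂ)^z - (2:ℂ)^z - (3:ℂ)^z - (5:ℂ)^z + 2
noncomputable def Fd (z : ℂ) : ℂ :=
  (30:ℂ)^z * Complex.log 30 - (2:ℂ)^z * Complex.log 2 - (3:ℂ)^z * Complex.log 3
    - (5:ℂ)^z * Complex.log 5
noncomputable def Fdd (z : ℂ) : ℂ :=
  (30:ℂ)^z * (Complex.log 30)^2 - (2:ℂ)^z * (Complex.log 2)^2 - (3:ℂ)^z * (Complex.log 3)^2
    - (5:ℂ)^z * (Complex.log 5)^2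

lemma hcpow_deriv (a : ℂ) (ha : a ≠ 0) (z : ℂ) :
    HasDerivAt (fun w => a ^ w) (a ^ z * Complex.log a) z := by
  simpa using (hasDerivAt_id z).const_cpow (Or.inl ha)

lemma hFm_deriv (z : ℂ) : HasDerivAt Fm (Fd z) z := by
  unfold Fm Fd
  exact ((((hcpow_deriv 30 (by norm_num) z).sub (hcpow_deriv 2 (by norm_num) z)).sub
    (hcpow_deriv 3 (by norm_num) z)).sub (hcpow_deriv 5 (by norm_num) z)).add_const 2

lemma hFd_deriv (z : ℂ) : HasDerivAt Fd (Fdd z) z := by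
  unfold Fd Fdd
  have h30 := (hcpow_deriv 30 (by norm_num) z).mul_const (Complex.log 30)
  have h2 := (hcpow_deriv 2 (by norm_num) z).mul_const (Complex.log 2)
  have h3 := (hcpow_deriv 3 (by norm_num) z).mul_const (Complex.log 3)
  have h5 := (hcpow_deriv 5 (by norm_num) z).mul_const (Complex.log 5)
  exact (((h30.sub h2).sub h3).sub h5).congr_deriv (by ring)

lemma clog2 : Complex.log 2 = ((Real.log 2 : ℝ):ℂ) := by
  rw [show (2:ℂ) = ((2:ℝ):ℂ) by norm_num]; exact (Complex.ofReal_log (by norm_num)).symm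
lemma clog3 : Complex.log 3 = ((Real.log 3 : ℝ):ℂ) := by
  rw [show (3:ℂ) = ((3:ℝ):ℂ) by norm_num]; exact (Complex.ofReal_log (by norm_num)).symm
lemma clog5 : Complex.log 5 = ((Real.log 5 : ℝ):ℂ) := by
  rw [show (5:ℂ) = ((5:ℝ):ℂ) by norm_num]; exact (Complex.ofReal_log (by norm_num)).symm
lemma clog30 : Complex.log 30 = ((Real.log 30 : ℝ):ℂ) := by
  rw [show (30:ℂ) = ((30:ℝ):ℂ) by norm_num]; exact (Complex.ofReal_log (by norm_num)).symm

lemma cpow_norm (x : ℝ) (hx : 0 < x) (z : ℂ) : ‖((x:ℝ):ℂ)^z‖ = x ^ z.re := by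
  rw [Complex.norm_cpow_eq_rpow_re_of_pos hx]

lemma cpow_norm_le (x : ℝ) (hx : 1 ≤ x) (z : ℂ) (hz : z.re ≤ 1) : ‖((x:ℝ):ℂ)^z‖ ≤ x := by
  rw [cpow_norm x (by linarith) z]
  calc x ^ z.re ≤ x ^ (1:ℝ) := Real.rpow_le_rpow_of_exponent_le hx hz
    _ = x := Real.rpow_one x

lemma boundFdd : ∀ w ∈ Metric.closedBall (⟨(223/500:ℝ), (1759/625:ℝ)⟩:ℂ) (39/10000),
    ‖Fdd w‖ ≤ 365 := by
  intro w hw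
  rw [Metric.mem_closedBall, dist_eq_norm] at hw
  have h1 : |(w - (⟨(223/500:ℝ), (1759/625:ℝ)⟩:ℂ)).re| ≤ 39/10000 :=
    (Complex.abs_re_le_norm _).trans (by assumption)
  have h2 : (w - (⟨(223/500:ℝ), (1759/625:ℝ)⟩:ℂ)).re = w.re - 223/500 := by
    simp [Complex.sub_re]
  rw [h2] at h1
  have hre : w.re ≤ 1 := by have := (abs_le.mp h1).2; linarith
  -- log bounds
  have hl2a := Real.log_two_gt_d9; have hl2b := Real.log_two_lt_d9
  norm_num at hl2a hl2b
  have hl3a := log3_lo; have hl3b := log3_hi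
  have hl5a := log5_lo; have hl5b := log5_hi
  have hl30 : Real.log 30 = Real.log 2 + Real.log 3 + Real.log 5 := log30eq
  unfold Fdd
  have n30 : ‖(30:ℂ)^w * (Complex.log 30)^2‖ ≤ 30 * (34012041808/10000000000)^2 := by
    rw [norm_mul, norm_pow, clog30, Complex.norm_real]
    have hb : ‖(30:ℂ)^w‖ ≤ 30 := by
      rw [show (30:ℂ) = ((30:ℝ):ℂ) by norm_num]
      exact cpow_norm_le 30 (by norm_num) w hre
    have hpos30 : (0:ℝ) ≤ Real.log 30 := by rw [hl30]; linarith
    have habs : |Real.log 30| ≤ 34012041808/10000000000 := by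
      rw [_root_.abs_of_nonneg hpos30, hl30]; linarith
    exact mul_le_mul hb (pow_le_pow_left₀ (abs_nonneg _) habs 2) (by positivity) (by norm_num)
  have n2 : ‖(2:ℂ)^w * (Complex.log 2)^2‖ ≤ 2 * (6931471808/10000000000)^2 := by
    rw [norm_mul, norm_pow, clog2, Complex.norm_real]
    have hb : ‖(2:ℂ)^w‖ ≤ 2 := by
      rw [show (2:ℂ) = ((2:ℝ):ℂ) by norm_num]
      exact cpow_norm_le 2 (by norm_num) w hre
    have habs : |Real.log 2| ≤ 6931471808/10000000000 := by
      rw [_root_.abs_of_nonneg (Real.log_nonneg (by norm_num))]; linarith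
    exact mul_le_mul hb (pow_le_pow_left₀ (abs_nonneg _) habs 2) (by positivity) (by norm_num)
  have n3 : ‖(3:ℂ)^w * (Complex.log 3)^2‖ ≤ 3 * (1098613/1000000)^2 := by
    rw [norm_mul, norm_pow, clog3, Complex.norm_real]
    have hb : ‖(3:ℂ)^w‖ ≤ 3 := by
      rw [show (3:ℂ) = ((3:ℝ):ℂ) by norm_num]
      exact cpow_norm_le 3 (by norm_num) w hre
    have habs : |Real.log 3| ≤ 1098613/1000000 := by
      rw [_root_.abs_of_nonneg (Real.log_nonneg (by norm_num))]; linarith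
    exact mul_le_mul hb (pow_le_pow_left₀ (abs_nonneg _) habs 2) (by positivity) (by norm_num)
  have n5 : ‖(5:ℂ)^w * (Complex.log 5)^2‖ ≤ 5 * (1609439/1000000)^2 := by
    rw [norm_mul, norm_pow, clog5, Complex.norm_real]
    have hb : ‖(5:ℂ)^w‖ ≤ 5 := by
      rw [show (5:ℂ) = ((5:ℝ):ℂ) by norm_num]
      exact cpow_norm_le 5 (by norm_num) w hre
    have habs : |Real.log 5| ≤ 1609439/1000000 := by
      rw [_root_.abs_of_nonneg (Real.log_nonneg (by norm_num))]; linarith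
    exact mul_le_mul hb (pow_le_pow_left₀ (abs_nonneg _) habs 2) (by positivity) (by norm_num)
  have tri : ‖(30:ℂ)^w * (Complex.log 30)^2 - (2:ℂ)^w * (Complex.log 2)^2
      - (3:ℂ)^w * (Complex.log 3)^2 - (5:ℂ)^w * (Complex.log 5)^2‖
      ≤ ‖(30:ℂ)^w * (Complex.log 30)^2‖ + ‖(2:ℂ)^w * (Complex.log 2)^2‖
        + ‖(3:ℂ)^w * (Complex.log 3)^2‖ + ‖(5:ℂ)^w * (Complex.log 5)^2‖ := by
    calc ‖(30:ℂ)^w * (Complex.log 30)^2 - (2:ℂ)^w * (Complex.log 2)^2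
        - (3:ℂ)^w * (Complex.log 3)^2 - (5:ℂ)^w * (Complex.log 5)^2‖
        ≤ ‖(30:ℂ)^w * (Complex.log 30)^2 - (2:ℂ)^w * (Complex.log 2)^2
          - (3:ℂ)^w * (Complex.log 3)^2‖ + ‖(5:ℂ)^w * (Complex.log 5)^2‖ := norm_sub_le _ _
      _ ≤ ‖(30:ℂ)^w * (Complex.log 30)^2 - (2:ℂ)^w * (Complex.log 2)^2‖
          + ‖(3:ℂ)^w * (Complex.log 3)^2‖ + ‖(5:ℂ)^w * (Complex.log 5)^2‖ := by
          gcongr ?_ + _; exact norm_sub_le _ _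
      _ ≤ _ := by gcongr ?_ + _ + _; exact norm_sub_le _ _
  refine tri.trans ?_
  calc ‖(30:ℂ)^w * (Complex.log 30)^2‖ + ‖(2:ℂ)^w * (Complex.log 2)^2‖
        + ‖(3:ℂ)^w * (Complex.log 3)^2‖ + ‖(5:ℂ)^w * (Complex.log 5)^2‖
      ≤ 30 * (34012041808/10000000000)^2 + 2 * (6931471808/10000000000)^2
        + 3 * (1098613/1000000)^2 + 5 * (1609439/1000000)^2 := by
        gcongr <;> first | exact n30 | exact n2 | exact n3 | exact n5
    _ ≤ 365 := by norm_num

lemma hsphere : ∀ z ∈ Metric.sphere (⟨(223/500:ℝ), (1759/625:ℝ)⟩:ℂ) (39/10000),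
    (43/1000:ℝ) ≤ ‖Fm z - Fm (⟨(223/500:ℝ), (1759/625:ℝ)⟩:ℂ)‖ := by
  intro z hz
  set c : ℂ := (⟨(223/500:ℝ), (1759/625:ℝ)⟩:ℂ) with hc
  have hzball : z ∈ Metric.closedBall c (39/10000) := Metric.sphere_subset_closedBall hz
  have hdist : ‖z - c‖ = 39/10000 := by
    rw [Metric.mem_sphere] at hz; rw [← dist_eq_norm]; exact hz
  have hcball : c ∈ Metric.closedBall c (39/10000) := Metric.mem_closedBall_self (by norm_num)
  have hlip : ∀ x ∈ Metric.closedBall c (39/10000), ‖Fd x - Fd c‖ ≤ 365 * ‖x - c‖ := by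
    intro x hx
    exact Convex.norm_image_sub_le_of_norm_hasDerivWithin_le
      (fun y _ => (hFd_deriv y).hasDerivWithinAt) (fun y hy => boundFdd y hy)
      (convex_closedBall _ _) hcball hx
  have hgb : ∀ y ∈ Metric.closedBall c (39/10000), ‖Fd y - Fd c‖ ≤ 365 * (39/10000) := by
    intro y hy
    refine (hlip y hy).trans ?_
    rw [Metric.mem_closedBall, dist_eq_norm] at hy
    nlinarith [norm_nonneg (y - c)]
  have hg : ∀ y ∈ Metric.closedBall c (39/10000),
      HasDerivWithinAt (fun w => Fm w - Fd c * w) (Fd y - Fd c) (Metric.closedBall c (39/10000)) y := by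
    intro y _
    have := (hFm_deriv y).sub ((hasDerivAt_id y).const_mul (Fd c))
    exact this.hasDerivWithinAt.congr_deriv (by ring)
  have key := Convex.norm_image_sub_le_of_norm_hasDerivWithin_le hg hgb
    (convex_closedBall _ _) hcball hzball
  rw [hdist] at key
  have hFd_lb : (629/50:ℝ) ≤ ‖Fd c‖ := by
    unfold Fd
    rw [clog30, clog2, clog3, clog5]
    exact hFd
  have e : Fm z - Fm c = Fd c * (z - c) + ((Fm z - Fd c * z) - (Fm c - Fd c * c)) := by ring
  have h4 : ‖Fd c * (z - c)‖ ≤ ‖Fm z - Fm c‖ + ‖(Fm z - Fd c * z) - (Fm c - Fd c * c)‖ := by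
    calc ‖Fd c * (z - c)‖
        = ‖(Fm z - Fm c) - ((Fm z - Fd c * z) - (Fm c - Fd c * c))‖ := by rw [e]; ring_nf
      _ ≤ _ := norm_sub_le _ _
  have h5 : ‖Fd c * (z - c)‖ = ‖Fd c‖ * (39/10000) := by rw [norm_mul, hdist]
  rw [h5] at h4
  nlinarith [key, hFd_lb]

theorem exists_complex_zero_two_three_five :
    ∃ z : ℂ, 0.44 < z.re ∧ z.re < 0.45 ∧ 2.81 < z.im ∧ z.im < 2.82 ∧
      1 + 1 / ((2 : ℂ) ^ z - 1) + 1 / ((3 : ℂ) ^ z - 1) + 1 / ((5 : ℂ) ^ z - 1) = 0 := by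
  set c : ℂ := (⟨(223/500:ℝ), (1759/625:ℝ)⟩:ℂ) with hc
  have hdiff : Differentiable ℂ Fm := fun z => (hFm_deriv z).differentiableAt
  have hFd_lb : (629/50:ℝ) ≤ ‖Fd c‖ := by
    unfold Fd; rw [clog30, clog2, clog3, clog5]; exact hFd
  have hne : ∃ᶠ z in nhds c, Fm z ≠ Fm c := by
    by_contra hcon
    rw [Filter.not_frequently] at hcon
    have hcon' : ∀ᶠ z in nhds c, Fm z = Fm c := hcon.mono fun z hz => not_not.mp hz
    have h0 : HasDerivAt Fm 0 c :=
      (hasDerivAt_const c (Fm c)).congr_of_eventuallyEq hcon'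
    have hu := h0.unique (hFm_deriv c)
    rw [← hu] at hFd_lb
    norm_num at hFd_lb
  have hsub := (hdiff.diffContOnCl).ball_subset_image_closedBall
    (by norm_num : (0:ℝ) < 39/10000) hsphere hne
  have h0mem : (0:ℂ) ∈ Metric.ball (Fm c) ((43/1000)/2) := by
    rw [Metric.mem_ball, dist_zero_left]
    have hFc' : ‖Fm c‖ ≤ 1163/1000000 := by unfold Fm; exact hFc
    linarith
  obtain ⟨w, hwmem, hFw⟩ := hsub h0mem
  rw [Metric.mem_closedBall, dist_eq_norm] at hwmem
  have hre1 : |(w - c).re| ≤ 39/10000 :=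
    (Complex.abs_re_le_norm _).trans (by assumption)
  have him1 : |(w - c).im| ≤ 39/10000 :=
    (Complex.abs_im_le_norm _).trans (by assumption)
  have hre2 : (w - c).re = w.re - 223/500 := by simp [Complex.sub_re, hc]
  have him2 : (w - c).im = w.im - 1759/625 := by simp [Complex.sub_im, hc]
  rw [hre2] at hre1; rw [him2] at him1
  obtain ⟨hreA, hreB⟩ := abs_le.mp hre1
  obtain ⟨himA, himB⟩ := abs_le.mp him1
  have hwrepos : 0 < w.re := by linarith
  have hne2 : (2:ℂ)^w - 1 ≠ 0 := by
    refine sub_ne_zero.mpr fun h => ?_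
    have hn : ‖(2:ℂ)^w‖ = 1 := by rw [h]; norm_num
    rw [show (2:ℂ) = ((2:ℝ):ℂ) by norm_num, cpow_norm 2 (by norm_num)] at hn
    have : 1 < (2:ℝ)^w.re :=
      (Real.one_lt_rpow_iff_of_pos (by norm_num)).mpr (Or.inl ⟨by norm_num, hwrepos⟩)
    linarith
  have hne3 : (3:ℂ)^w - 1 ≠ 0 := by
    refine sub_ne_zero.mpr fun h => ?_
    have hn : ‖(3:ℂ)^w‖ = 1 := by rw [h]; norm_num
    rw [show (3:ℂ) = ((3:ℝ):ℂ) by norm_num, cpow_norm 3 (by norm_num)] at hn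
    have : 1 < (3:ℝ)^w.re :=
      (Real.one_lt_rpow_iff_of_pos (by norm_num)).mpr (Or.inl ⟨by norm_num, hwrepos⟩)
    linarith
  have hne5 : (5:ℂ)^w - 1 ≠ 0 := by
    refine sub_ne_zero.mpr fun h => ?_
    have hn : ‖(5:ℂ)^w‖ = 1 := by rw [h]; norm_num
    rw [show (5:ℂ) = ((5:ℝ):ℂ) by norm_num, cpow_norm 5 (by norm_num)] at hn
    have : 1 < (5:ℝ)^w.re :=
      (Real.one_lt_rpow_iff_of_pos (by norm_num)).mpr (Or.inl ⟨by norm_num, hwrepos⟩)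
    linarith
  have hFw' : (2:ℂ)^w*(3:ℂ)^w*(5:ℂ)^w - (2:ℂ)^w - (3:ℂ)^w - (5:ℂ)^w + 2 = 0 := by
    have := hFw
    unfold Fm at this
    rw [cpow30] at this
    linear_combination this
  refine ⟨w, by norm_num; linarith, by norm_num; linarith, by norm_num; linarith,
    by norm_num; linarith, ?_⟩
  have key : 1 + 1 / ((2:ℂ)^w - 1) + 1 / ((3:ℂ)^w - 1) + 1 / ((5:ℂ)^w - 1)
      = ((2:ℂ)^w*(3:ℂ)^w*(5:ℂ)^w - (2:ℂ)^w - (3:ℂ)^w - (5:ℂ)^w + 2)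
        / (((2:ℂ)^w - 1) * (((3:ℂ)^w - 1) * ((5:ℂ)^w - 1))) := by
    field_simp
    ring
  rw [key, hFw', zero_div]
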